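/- For all n ≥ 1, the bivariate polynomial α_n(t,q) = Σ_{π ∈ SP_n} t^{des(π)} q^{seg(π)} satisfies the symmetry α_n(t,q) = t^{n−1} α_n(1/t, q/t), i.e., K(n,i,j) = K(n, n−1−i−j, j) for all i,j. -/

import Mathlib

open Finset

/-- A segmented permutation of size `n`: a permutation of `Fin n` together with a
set of barred gaps among the `n-1` gaps between consecutive positions. -/
abbrev SegPerm (n : ℕ) := Equiv.Perm (Fin n) × Finset (Fin (n - 1))

/-- The left endpoint of gap `i`, as an element of `Fin n`. -/
def gapL {n : ℕ} (i : Fin (n - 1)) : Fin n := ⟨i.1, by have := i.2; omega⟩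

/-- The right endpoint of gap `i`, as an element of `Fin n`. -/
def gapR {n : ℕ} (i : Fin (n - 1)) : Fin n := ⟨i.1 + 1, by have := i.2; omega⟩

/-- Number of descents of a segmented permutation: gaps that are not barred and
where the value decreases. -/
def desNum {n : ℕ} (π : SegPerm n) : ℕ :=
  (univ.filter (fun i : Fin (n - 1) => i ∉ π.2 ∧ π.1 (gapR i) < π.1 (gapL i))).card

/-- Number of bars of a segmented permutation. -/
def segNum {n : ℕ} (π : SegPerm n) : ℕ := π.2.card

/-- Number of descents of an ordinary permutation. -/
def permDes {n : ℕ} (σ : Equiv.Perm (Fin n)) : ℕ :=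
  (univ.filter (fun i : Fin (n - 1) => σ (gapR i) < σ (gapL i))).card

/-- The Eulerian number `A(n,k)`. -/
def eulerian (n k : ℕ) : ℕ :=
  ((univ : Finset (Equiv.Perm (Fin n))).filter (fun σ => permDes σ = k)).card

/-- `K(n,i,j)`: number of segmented permutations of size `n` with `i` descents
and `j` bars. -/
def Knum (n i j : ℕ) : ℕ :=
  ((univ : Finset (SegPerm n)).filter (fun π => desNum π = i ∧ segNum π = j)).card

/-- `K(n,i,j)` with integer indices; it vanishes for negative indices. -/
def Kint (n : ℕ) (i j : ℤ) : ℤ :=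
  (((univ : Finset (SegPerm n)).filter
      (fun π => (desNum π : ℤ) = i ∧ (segNum π : ℤ) = j)).card : ℤ)

/-- `T(n,k)`: number of segmented permutations of size `n` with `k` descents. -/
def Tnum (n k : ℕ) : ℕ :=
  ((univ : Finset (SegPerm n)).filter (fun π => desNum π = k)).card

/-- `T(n,k)` with an integer index; it vanishes for negative indices. -/
def Tint (n : ℕ) (k : ℤ) : ℤ :=
  (((univ : Finset (SegPerm n)).filter (fun π => (desNum π : ℤ) = k)).card : ℤ)

/-- Stirling numbers of the second kind. -/
def stirling : ℕ → ℕ → ℕ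
  | 0, 0 => 1
  | 0, _ + 1 => 0
  | _ + 1, 0 => 0
  | n + 1, k + 1 => (k + 1) * stirling n (k + 1) + stirling n k

/-- The generalized Eulerian polynomial `α_n(t,q)`, as a function of real arguments. -/
noncomputable def alphaF (n : ℕ) (t q : ℝ) : ℝ :=
  ∑ π : SegPerm n, t ^ desNum π * q ^ segNum π


lemma desNum_rev {n : ℕ} (σ : Equiv.Perm (Fin n)) (S : Finset (Fin (n-1))) :
    desNum (Fin.revPerm * σ, S) + desNum (σ, S) + S.card = n - 1 := by
  classical
  unfold desNum
  simp only
  have hne : ∀ i : Fin (n-1), (σ (gapL i)).1 ≠ (σ (gapR i)).1 := by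
    intro i h
    have := σ.injective (Fin.ext h)
    simp [gapL, gapR, Fin.ext_iff] at this
  have h1 : (univ.filter (fun i : Fin (n - 1) => i ∉ S ∧ (Fin.revPerm * σ : Equiv.Perm (Fin n)) (gapR i) < (Fin.revPerm * σ : Equiv.Perm (Fin n)) (gapL i)))
      = univ.filter (fun i => i ∉ S ∧ σ (gapL i) < σ (gapR i)) := by
    apply filter_congr
    intro i _
    simp [Equiv.Perm.mul_apply, Fin.rev_lt_rev]
  rw [h1]
  set T := univ.filter (fun i : Fin (n - 1) => i ∉ S) with hT
  have e1 : (univ.filter (fun i : Fin (n - 1) => i ∉ S ∧ σ (gapL i) < σ (gapR i)))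
      = T.filter (fun i => σ (gapL i) < σ (gapR i)) := by
    rw [hT, Finset.filter_filter]
  have e2 : (univ.filter (fun i : Fin (n - 1) => i ∉ S ∧ σ (gapR i) < σ (gapL i)))
      = T.filter (fun i => ¬ σ (gapL i) < σ (gapR i)) := by
    rw [hT, Finset.filter_filter]
    apply filter_congr
    intro i _
    have := hne i
    simp only [Fin.lt_iff_val_lt_val]
    constructor
    · rintro ⟨h1, h2⟩; exact ⟨h1, by omega⟩
    · rintro ⟨h1, h2⟩; exact ⟨h1, by omega⟩
  rw [e1, e2, Finset.card_filter_add_card_filter_not]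
  have hTc : T = Sᶜ := by
    ext i; simp [hT]
  rw [hTc, Finset.card_compl]
  have := Finset.card_le_univ S
  simp only [Fintype.card_fin] at *
  omega

/-- the symmetry `α_n(t,q) = t^(n-1) α_n(1/t, q/t)`. -/
theorem alphaF_symmetry (n : ℕ) (hn : 1 ≤ n) (t q : ℝ) (ht : t ≠ 0) :
    alphaF n t q = t ^ (n - 1) * alphaF n (1 / t) (q / t) := by
  classical
  unfold alphaF
  rw [Finset.mul_sum]
  rw [← Equiv.sum_comp ((Equiv.mulLeft (Fin.revPerm : Equiv.Perm (Fin n))).prodCongr (Equiv.refl (Finset (Fin (n-1)))))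
    (fun π : SegPerm n => t ^ (n-1) * ((1/t) ^ desNum π * (q/t) ^ segNum π))]
  apply Finset.sum_congr rfl
  rintro ⟨σ, S⟩ -
  simp only [Equiv.prodCongr_apply, Equiv.coe_mulLeft, Equiv.refl_apply, Prod.map]
  have key := desNum_rev σ S
  set a' := desNum (Fin.revPerm * σ, S) with ha'
  set a := desNum (σ, S) with ha
  have hseg : segNum ((Fin.revPerm * σ : Equiv.Perm (Fin n)), S) = S.card := rfl
  have hseg2 : segNum ((σ : Equiv.Perm (Fin n)), S) = S.card := rfl
  rw [hseg, hseg2]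
  have hpow : t ^ (n - 1) = t ^ a' * t ^ a * t ^ S.card := by
    rw [← pow_add, ← pow_add, key]
  rw [hpow, div_pow, div_pow, one_pow]
  have ht' : (t:ℝ) ^ a' ≠ 0 := pow_ne_zero _ ht
  have ht'' : (t:ℝ) ^ S.card ≠ 0 := pow_ne_zero _ ht
  field_simp
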